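/- With y₁^± = (∓i·t^{±1}) ⊗ s₁, y₂^± = (i·t^{±1}) ⊗ s₂, y₃^± = i ⊗ s₃ in the loop algebra sl(2,ℂ)[t,t⁻¹], the Serre-type relations hold: [y₂^±, [y₁^±, [y₁^±, y₂^±]]] = 0 and [y₂^±, [y₂^±, [y₂^±, y₁^±]]] + [y₁^±, [y₁^±, [y₁^±, y₂^±]]] = 0. -/
import Mathlib


open TensorProduct Complex

/-- An element `c·t^k ⊗ s` of the loop algebra `ℂ[t,t⁻¹] ⊗ sl(2,ℂ)`. -/
noncomputable def loopElt {L : Type*} [LieRing L] [LieAlgebra ℂ L]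
    (c : ℂ) (k : ℤ) (s : L) : LaurentPolynomial ℂ ⊗[ℂ] L :=
  (c • LaurentPolynomial.T k) ⊗ₜ[ℂ] s

lemma loopElt_bracket {L : Type*} [LieRing L] [LieAlgebra ℂ L]
    (c d : ℂ) (k l : ℤ) (s t : L) :
    ⁅loopElt c k s, loopElt d l t⁆ = loopElt (c * d) (k + l) ⁅s, t⁆ := by
  unfold loopElt
  rw [LieAlgebra.ExtendScalars.bracket_tmul, smul_mul_smul_comm,
    ← LaurentPolynomial.T_add]

lemma loopElt_smul {L : Type*} [LieRing L] [LieAlgebra ℂ L]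
    (c a : ℂ) (k : ℤ) (s : L) :
    loopElt c k (a • s) = loopElt (c * a) k s := by
  unfold loopElt
  rw [← TensorProduct.smul_tmul, smul_smul, mul_comm a c]

lemma loopElt_zero {L : Type*} [LieRing L] [LieAlgebra ℂ L]
    (c : ℂ) (k : ℤ) : loopElt c k (0 : L) = 0 := by
  simp [loopElt]

lemma loopElt_neg {L : Type*} [LieRing L] [LieAlgebra ℂ L]
    (c : ℂ) (k : ℤ) (s : L) : loopElt c k s + loopElt (-c) k s = 0 := by
  simp [loopElt, ← add_tmul, ← add_smul]


lemma loopElt_cancel {L : Type*} [LieRing L] [LieAlgebra ℂ L]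
    (c d : ℂ) (k : ℤ) (s : L) (h : c + d = 0) :
    loopElt c k s + loopElt d k s = 0 := by
  simp only [loopElt, ← add_tmul, ← add_smul, h]
  simp

/-- Serre-type relations (32)-(33) in the loop algebra:
`⁅y₂^±, ⁅y₁^±, ⁅y₁^±, y₂^±⁆⁆⁆ = 0` and
`⁅y₂^±, ⁅y₂^±, ⁅y₂^±, y₁^±⁆⁆⁆ + ⁅y₁^±, ⁅y₁^±, ⁅y₁^±, y₂^±⁆⁆⁆ = 0`. -/
theorem stmt12 {L : Type*} [LieRing L] [LieAlgebra ℂ L] (s₁ s₂ s₃ : L)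
    (h12 : ⁅s₁, s₂⁆ = I • s₃) (h23 : ⁅s₂, s₃⁆ = I • s₁)
    (h31 : ⁅s₃, s₁⁆ = I • s₂) :
    letI y1p := loopElt (-I) 1 s₁
    letI y1m := loopElt I (-1) s₁
    letI y2p := loopElt I 1 s₂
    letI y2m := loopElt I (-1) s₂
    (⁅y2p, ⁅y1p, ⁅y1p, y2p⁆⁆⁆ = 0) ∧
    (⁅y2m, ⁅y1m, ⁅y1m, y2m⁆⁆⁆ = 0) ∧
    (⁅y2p, ⁅y2p, ⁅y2p, y1p⁆⁆⁆ + ⁅y1p, ⁅y1p, ⁅y1p, y2p⁆⁆⁆ = 0) ∧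
    (⁅y2m, ⁅y2m, ⁅y2m, y1m⁆⁆⁆ + ⁅y1m, ⁅y1m, ⁅y1m, y2m⁆⁆⁆ = 0) := by
  have h13 : ⁅s₁, s₃⁆ = (-I) • s₂ := by rw [← lie_skew, h31, neg_smul]
  have h21 : ⁅s₂, s₁⁆ = (-I) • s₃ := by rw [← lie_skew, h12, neg_smul]
  have e1 : ⁅s₁, ⁅s₁, s₂⁆⁆ = (1 : ℂ) • s₂ := by
    rw [h12, lie_smul, h13, smul_smul]; norm_num [Complex.I_mul_I]
  have e2 : ⁅s₂, ⁅s₂, s₁⁆⁆ = (1 : ℂ) • s₁ := by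
    rw [h21, lie_smul, h23, smul_smul]; norm_num [Complex.I_mul_I]
  refine ⟨?_, ?_, ?_, ?_⟩ <;>
    simp only [loopElt_bracket, h12, h21, h23, h13, loopElt_smul, lie_self,
      loopElt_zero] <;>
    try exact loopElt_cancel _ _ _ _ (by ring)
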